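/- Diagonal powers of the random tridiagonal matrix expand over closed walks: for N > k ≥ 1, any x : Fin N → ℝ, and any index r : Fin N, (M(x)^k)_{r,r} = ∑_s ∏_{j=−k}^{k−1} (x_{r+j mod N})^{u_s(j)}, where the sum runs over all closed walks s of length k and u_s(j) is the up-crossing count of s at j. -/

import Mathlib

set_option maxRecDepth 4000

/-- A walk of length `L`: a function `s : Fin (L+1) → ℤ` with `s 0 = 0` and
unit steps `|s (i+1) - s i| = 1` for all `i < L`. -/
def IsWalk (L : ℕ) (s : Fin (L + 1) → ℤ) : Prop :=
  s 0 = 0 ∧ ∀ i : Fin L, |s i.succ - s i.castSucc| = 1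

/-- A closed walk: a walk that ends at the origin. -/
def IsClosedWalk (L : ℕ) (s : Fin (L + 1) → ℤ) : Prop :=
  IsWalk L s ∧ s (Fin.last L) = 0

/-- The number of visits of the walk `s` to the site `x`. -/
def visits (L : ℕ) (s : Fin (L + 1) → ℤ) (x : ℤ) : ℕ :=
  Fintype.card {i : Fin (L + 1) // s i = x}

/-- A walk is even-visiting if every site different from `0` is visited an
even number of times. -/
def EvenVisiting (L : ℕ) (s : Fin (L + 1) → ℤ) : Prop :=
  ∀ x : ℤ, x ≠ 0 → Even (visits L s x)

/-- The up-crossing count `u(j)`: the number of indices `i < L` with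
`s i = j` and `s (i+1) = j + 1`. -/
def upcross (L : ℕ) (s : Fin (L + 1) → ℤ) (j : ℤ) : ℕ :=
  Fintype.card {i : Fin L // s i.castSucc = j ∧ s i.succ = j + 1}

/-- The random tridiagonal matrix `M x`: the `N × N` matrix with
`(M x) i j = 1` if `j ≡ i - 1 (mod N)`, `(M x) i j = x i` if `j ≡ i + 1 (mod N)`,
and `0` otherwise (arithmetic on `Fin N` is modulo `N`). -/
def Mmat (N : ℕ) [NeZero N] (x : Fin N → ℝ) : Matrix (Fin N) (Fin N) ℝ :=
  fun i j => if j = i - 1 then 1 else if j = i + 1 then x i else 0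

open Fin.CommRing

/- ### Auxiliary development -/

open Finset

/-- Step value of a sign. -/
def sgn (b : Bool) : ℤ := if b then 1 else -1

lemma abs_sgn (b : Bool) : |sgn b| = 1 := by cases b <;> simp [sgn]

/-- Partial sums of a sign sequence. -/
def pS (L : ℕ) (σ : Fin L → Bool) (i : Fin (L + 1)) : ℤ :=
  ∑ t : Fin L, if (t : ℕ) < (i : ℕ) then sgn (σ t) else 0

lemma pS_zero (L : ℕ) (σ : Fin L → Bool) : pS L σ 0 = 0 := by
  simp [pS]

lemma pS_succ (L : ℕ) (σ : Fin L → Bool) (i : Fin L) :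
    pS L σ i.succ = pS L σ i.castSucc + sgn (σ i) := by
  have key : ∀ t : Fin L, (if (t : ℕ) < (i.succ : ℕ) then sgn (σ t) else 0)
      = (if (t : ℕ) < (i.castSucc : ℕ) then sgn (σ t) else 0)
        + (if t = i then sgn (σ t) else 0) := by
    intro t
    rcases eq_or_ne t i with rfl | h
    · simp [Fin.val_succ]
    · have hv : (t : ℕ) ≠ (i : ℕ) := fun hh => h (Fin.ext hh)
      have h1 : ((t : ℕ) < (i : ℕ) + 1) ↔ ((t : ℕ) < (i : ℕ)) := by omega
      simp [Fin.val_succ, Fin.coe_castSucc, h, h1]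
  unfold pS
  rw [Finset.sum_congr rfl (fun t _ => key t), Finset.sum_add_distrib,
    Finset.sum_ite_eq' Finset.univ i]
  simp

lemma abs_pS_le (L : ℕ) (σ : Fin L → Bool) (i : Fin (L + 1)) :
    |pS L σ i| ≤ (i : ℕ) := by
  induction i using Fin.induction with
  | zero => simp [pS_zero]
  | succ i ih =>
      rw [pS_succ]
      calc |pS L σ i.castSucc + sgn (σ i)| ≤ |pS L σ i.castSucc| + |sgn (σ i)| := abs_add_le _ _
        _ ≤ (i : ℕ) + 1 := by
            have := abs_sgn (σ i)
            have h2 := ih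
            simp only [Fin.coe_castSucc] at h2
            omega
        _ = ((i.succ : ℕ) : ℤ) := by simp [Fin.val_succ]

lemma pS_snoc (L : ℕ) (τ : Fin L → Bool) (b : Bool) (i : Fin (L + 1)) :
    pS (L + 1) (Fin.snoc τ b) i.castSucc = pS L τ i := by
  unfold pS
  rw [Fin.sum_univ_castSucc]
  have hlast : ¬ ((Fin.last L : ℕ) < ((i.castSucc : Fin (L + 2)) : ℕ)) := by
    simp only [Fin.val_last, Fin.coe_castSucc]
    omega
  rw [if_neg hlast, add_zero]
  exact Finset.sum_congr rfl fun t _ => by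
    simp [Fin.snoc_castSucc, Fin.coe_castSucc]

lemma pS_snoc_last (L : ℕ) (τ : Fin L → Bool) (b : Bool) :
    pS (L + 1) (Fin.snoc τ b) (Fin.last (L + 1)) = pS L τ (Fin.last L) + sgn b := by
  rw [← Fin.succ_last, pS_succ, pS_snoc]
  rw [Fin.snoc_last]

/-- The weight of a sign sequence. -/
noncomputable def wt (N : ℕ) [NeZero N] (x : Fin N → ℝ) (r : Fin N) (L : ℕ)
    (σ : Fin L → Bool) : ℝ :=
  ∏ i : Fin L, if σ i then x (r + ((pS L σ i.castSucc : ℤ) : Fin N)) else 1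

lemma wt_snoc (N : ℕ) [NeZero N] (x : Fin N → ℝ) (r : Fin N) (L : ℕ)
    (τ : Fin L → Bool) (b : Bool) :
    wt N x r (L + 1) (Fin.snoc τ b)
      = wt N x r L τ *
        (if b then x (r + ((pS L τ (Fin.last L) : ℤ) : Fin N)) else 1) := by
  unfold wt
  rw [Fin.prod_univ_castSucc]
  congr 1
  · exact Finset.prod_congr rfl fun i _ => by
      rw [pS_snoc]
      rw [Fin.snoc_castSucc]
  · rw [pS_snoc, Fin.snoc_last]

/-- Path expansion of powers of `Mmat`. -/
lemma pow_apply_eq (N : ℕ) [NeZero N] (h2 : (2 : Fin N) ≠ 0) (x : Fin N → ℝ)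
    (r : Fin N) : ∀ (L : ℕ) (t : Fin N), (Mmat N x ^ L) r t =
      ∑ σ : Fin L → Bool,
        if r + ((pS L σ (Fin.last L) : ℤ) : Fin N) = t then wt N x r L σ else 0 := by
  intro L
  induction L with
  | zero =>
      intro t
      rw [pow_zero]
      have hσ : ∀ σ : Fin 0 → Bool,
          (if r + ((pS 0 σ (Fin.last 0) : ℤ) : Fin N) = t then wt N x r 0 σ else 0)
            = if r = t then (1:ℝ) else 0 := by
        intro σ
        have hp : pS 0 σ (Fin.last 0) = 0 := by simp [pS]
        have hw : wt N x r 0 σ = 1 := by simp [wt]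
        rw [hp, hw]
        norm_num
      rw [Finset.sum_congr rfl (fun σ _ => hσ σ), Finset.sum_const, Finset.card_univ,
        Fintype.card_unique, one_smul, Matrix.one_apply]
  | succ L ih =>
      intro t
      rw [pow_succ, Matrix.mul_apply]
      -- LHS
      have lhs_eq : ∑ u : Fin N, (Mmat N x ^ L) r u * Mmat N x u t
          = ∑ τ : Fin L → Bool,
              wt N x r L τ * Mmat N x (r + ((pS L τ (Fin.last L) : ℤ) : Fin N)) t := by
        simp_rw [ih, Finset.sum_mul]
        rw [Finset.sum_comm]
        refine Finset.sum_congr rfl fun τ _ => ?_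
        rw [Finset.sum_congr rfl (fun u _ => by rw [ite_mul, zero_mul]),
          Finset.sum_ite_eq Finset.univ]
        simp
      rw [lhs_eq]
      -- RHS : reindex by snoc
      have hbij : Function.Bijective
          (fun p : (Fin L → Bool) × Bool => (Fin.snoc p.1 p.2 : Fin (L + 1) → Bool)) := by
        constructor
        · intro p q h
          have h' : (Fin.snoc p.1 p.2 : Fin (L + 1) → Bool) = Fin.snoc q.1 q.2 := h
          have h1 := congrArg Fin.init h'
          have hlast := congrArg (fun f : Fin (L + 1) → Bool => f (Fin.last L)) h'
          rw [Fin.init_snoc, Fin.init_snoc] at h1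
          simp only [Fin.snoc_last] at hlast
          exact Prod.ext h1 hlast
        · intro f
          exact ⟨(Fin.init f, f (Fin.last L)), Fin.snoc_init_self f⟩
      rw [← Fintype.sum_bijective _ hbij
        (fun p : (Fin L → Bool) × Bool =>
          if r + ((pS (L + 1) (Fin.snoc p.1 p.2) (Fin.last (L + 1)) : ℤ) : Fin N) = t
            then wt N x r (L + 1) (Fin.snoc p.1 p.2) else 0)
        (fun σ : Fin (L + 1) → Bool =>
          if r + ((pS (L + 1) σ (Fin.last (L + 1)) : ℤ) : Fin N) = t
            then wt N x r (L + 1) σ else 0)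
        (fun p => rfl)]
      rw [Fintype.sum_prod_type]
      refine Finset.sum_congr rfl fun τ _ => ?_
      rw [Fintype.sum_bool]
      simp only [pS_snoc_last, wt_snoc]
      set eτ : ℤ := pS L τ (Fin.last L) with heτ
      set u : Fin N := r + ((eτ : ℤ) : Fin N) with hu
      have hcast1 : r + ((eτ + sgn true : ℤ) : Fin N) = u + 1 := by
        rw [hu]; simp [sgn]; ring
      have hcast2 : r + ((eτ + sgn false : ℤ) : Fin N) = u - 1 := by
        rw [hu]; simp [sgn]; ring
      rw [hcast1, hcast2]
      simp only [eq_self_iff_true, if_true, Bool.false_eq_true, if_false, mul_one]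
      have hne : u + 1 ≠ u - 1 := by
        intro h
        apply h2
        have h0 : (u + 1) - (u - 1) = 0 := by rw [h]; ring
        calc (2 : Fin N) = (u + 1) - (u - 1) := by ring
          _ = 0 := h0
      by_cases hA : u + 1 = t <;> by_cases hB : u - 1 = t
      · exact absurd (hA.trans hB.symm) hne
      · have e1 : ¬ (t = u - 1) := fun h => hB h.symm
        have e2 : t = u + 1 := hA.symm
        rw [if_pos hA, if_neg hB]
        unfold Mmat
        rw [if_neg e1, if_pos e2, add_zero]
      · have e1 : t = u - 1 := hB.symm
        rw [if_neg hA, if_pos hB]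
        unfold Mmat
        rw [if_pos e1, zero_add, mul_one]
      · have e1 : ¬ t = u - 1 := fun h => hB h.symm
        have e2 : ¬ t = u + 1 := fun h => hA h.symm
        rw [if_neg hA, if_neg hB]
        unfold Mmat
        rw [if_neg e1, if_neg e2, mul_zero, add_zero]

/-- Sign sequence of a walk. -/
def signs (k : ℕ) (f : Fin (k + 1) → ℤ) : Fin k → Bool :=
  fun i => decide (f i.succ = f i.castSucc + 1)

lemma pS_signs (k : ℕ) (f : Fin (k + 1) → ℤ) (hf : IsWalk k f) (i : Fin (k + 1)) :
    pS k (signs k f) i = f i := by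
  induction i using Fin.induction with
  | zero => rw [pS_zero, hf.1]
  | succ i ih =>
      rw [pS_succ, ih]
      have hstep := hf.2 i
      rw [abs_eq (by norm_num : (0:ℤ) ≤ 1)] at hstep
      by_cases h : f i.succ = f i.castSucc + 1
      · simp [signs, h, sgn]
      · have hval : signs k f i = false := by
          simp only [signs, decide_eq_false_iff_not]
          exact h
        have hs : f i.succ = f i.castSucc - 1 := by
          rcases hstep with h1 | h1
          · exact absurd (by linarith : f i.succ = f i.castSucc + 1) h
          · linarith
        rw [hval, hs]
        simp [sgn]
        ring

lemma signs_pS (k : ℕ) (σ : Fin k → Bool) : signs k (pS k σ) = σ := by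
  funext i
  have hstep := pS_succ k σ i
  by_cases h : σ i
  · simp only [signs, h]
    simp only [h, sgn, if_true] at hstep
    simp [hstep]
  · simp only [Bool.not_eq_true] at h
    simp only [signs, h]
    simp only [h, sgn] at hstep
    simp only [Bool.false_eq_true, if_false] at hstep
    rw [hstep]
    simp only [decide_eq_false_iff_not]
    omega

lemma isWalk_pS (k : ℕ) (σ : Fin k → Bool) : IsWalk k (pS k σ) :=
  ⟨pS_zero k σ, fun i => by rw [pS_succ]; simp [abs_sgn]⟩

lemma upcross_eq_card (k : ℕ) (f : Fin (k + 1) → ℤ) (hf : IsWalk k f) (j : ℤ) :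
    upcross k f j = (Finset.univ.filter
      (fun i : Fin k => pS k (signs k f) i.castSucc = j ∧ signs k f i = true)).card := by
  rw [upcross, Fintype.card_subtype]
  congr 1
  apply Finset.filter_congr
  intro i _
  rw [pS_signs k f hf]
  constructor
  · rintro ⟨h1, h2⟩
    refine ⟨h1, ?_⟩
    simp only [signs, decide_eq_true_eq]
    rw [h2, h1]
  · rintro ⟨h1, h2⟩
    simp only [signs, decide_eq_true_eq] at h2
    exact ⟨h1, by rw [h2, h1]⟩

lemma wt_eq_prod (N : ℕ) [NeZero N] (x : Fin N → ℝ) (r : Fin N) (k : ℕ)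
    (σ : Fin k → Bool) :
    wt N x r k σ = ∏ j ∈ Finset.Icc (-(k : ℤ)) ((k : ℤ) - 1),
      (x (r + (j : Fin N))) ^
        (Finset.univ.filter (fun i : Fin k => pS k σ i.castSucc = j ∧ σ i = true)).card := by
  have h1 : wt N x r k σ
      = ∏ i ∈ Finset.univ.filter (fun i : Fin k => σ i = true),
          x (r + ((pS k σ i.castSucc : ℤ) : Fin N)) := by
    unfold wt
    rw [Finset.prod_filter]
  rw [h1]
  rw [← Finset.prod_fiberwise_of_maps_to
    (g := fun i : Fin k => pS k σ i.castSucc)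
    (t := Finset.Icc (-(k : ℤ)) ((k : ℤ) - 1))
    (fun i _ => by
      have h := abs_pS_le k σ i.castSucc
      rw [abs_le] at h
      simp only [Fin.coe_castSucc] at h
      have hik : (i : ℕ) < k := i.isLt
      rw [Finset.mem_Icc]
      beta_reduce
      omega)
    (fun i => x (r + ((pS k σ i.castSucc : ℤ) : Fin N)))]
  refine Finset.prod_congr rfl fun j _ => ?_
  rw [Finset.filter_filter]
  have heq : (Finset.univ.filter (fun i : Fin k => σ i = true ∧ pS k σ i.castSucc = j))
      = (Finset.univ.filter (fun i : Fin k => pS k σ i.castSucc = j ∧ σ i = true)) := by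
    apply Finset.filter_congr; intro i _; constructor <;> (rintro ⟨a, b⟩; exact ⟨b, a⟩)
  rw [heq]
  rw [← Finset.prod_const]
  exact Finset.prod_congr rfl fun i hi => by
    rw [Finset.mem_filter] at hi
    rw [hi.2.1]

noncomputable instance fintypeClosedWalk (k : ℕ) :
    Fintype {f : Fin (k + 1) → ℤ // IsClosedWalk k f} :=
  Fintype.ofInjective (fun s => signs k s.1) (by
    intro a b h
    apply Subtype.ext
    funext i
    have h2 : signs k a.1 = signs k b.1 := h
    rw [← pS_signs k a.1 a.2.1 i, ← pS_signs k b.1 b.2.1 i, h2])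

lemma intCast_fin_eq_zero (N : ℕ) [NeZero N] (z : ℤ) (hz : |z| < N) :
    ((z : Fin N) = 0 ↔ z = 0) := by
  constructor
  · intro h
    rcases le_or_gt 0 z with hz0 | hz0
    · lift z to ℕ using hz0
      rw [Int.cast_natCast, Fin.natCast_eq_zero] at h
      rw [abs_of_nonneg (by positivity)] at hz
      have hzN : z < N := by exact_mod_cast hz
      rcases Nat.eq_zero_or_pos z with h0 | h0
      · exact_mod_cast congrArg (Nat.cast : ℕ → ℤ) h0
      · exact absurd (Nat.le_of_dvd h0 h) (by omega)
    · exfalso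
      have h' : ((-z : ℤ) : Fin N) = 0 := by
        rw [Int.cast_neg, h, neg_zero]
      have hz0' : (0:ℤ) ≤ -z := by omega
      obtain ⟨m, hm⟩ := Int.eq_ofNat_of_zero_le hz0'
      rw [hm, Int.cast_natCast, Fin.natCast_eq_zero] at h'
      have hmN : (m : ℤ) < N := by rw [abs_of_neg hz0] at hz; omega
      have hm0 : m ≠ 0 := by omega
      have := Nat.le_of_dvd (Nat.pos_of_ne_zero hm0) h'
      omega
  · rintro rfl; simp

/-- Diagonal powers of the random tridiagonal matrix expand over closed walks:
for `N > k ≥ 1`, any `x : Fin N → ℝ` and any index `r : Fin N`,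
`(M x ^ k) r r = ∑_s ∏_{j = -k}^{k-1} (x (r + j mod N)) ^ (u_s j)`, where the sum
runs over all closed walks `s` of length `k` and `u_s j` is the up-crossing
count of `s` at `j`. -/
theorem diag_pow_eq_sum_walks (N k : ℕ) [NeZero N] (hN : 2 ≤ N)
    (hk : 1 ≤ k) (hkN : k < N) (x : Fin N → ℝ) (r : Fin N) :
    (Mmat N x ^ k) r r =
      ∑ᶠ s : {f : Fin (k + 1) → ℤ // IsClosedWalk k f},
        ∏ j ∈ Finset.Icc (-(k : ℤ)) ((k : ℤ) - 1),
          (x (r + (j : Fin N))) ^ (upcross k s.1 j) := by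
  rcases eq_or_ne k 1 with rfl | hk1
  · -- length-1 case: both sides are zero
    have hempty : IsEmpty {f : Fin (1 + 1) → ℤ // IsClosedWalk 1 f} := by
      constructor
      rintro ⟨f, ⟨⟨h0, hstep⟩, hlast⟩⟩
      have habs := hstep 0
      have h1 : (0 : Fin 1).succ = Fin.last 1 := rfl
      have h2 : (0 : Fin 1).castSucc = (0 : Fin 2) := rfl
      rw [h1, h2, hlast, h0] at habs
      norm_num at habs
    rw [finsum_of_isEmpty]
    rw [pow_one]
    have hone : (1 : Fin N) ≠ 0 := by
      intro h
      have := Fin.one_eq_zero_iff.mp h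
      omega
    have hc1 : r ≠ r - 1 := by
      intro h
      apply hone
      have h0 : r - (r - 1) = 0 := by rw [← h]; ring
      calc (1 : Fin N) = r - (r - 1) := by ring
        _ = 0 := h0
    have hc2 : r ≠ r + 1 := by
      intro h
      apply hone
      have h' := h.symm
      rwa [add_eq_left] at h'
    simp [Mmat, hc1, hc2]
  · -- main case: N ≥ 3
    have hN3 : 3 ≤ N := by omega
    have h2 : (2 : Fin N) ≠ 0 := by
      intro h
      have h' : ((2 : ℕ) : Fin N) = 0 := by exact_mod_cast h
      rw [Fin.natCast_eq_zero] at h'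
      have := Nat.le_of_dvd (by norm_num) h'
      omega
    rw [finsum_eq_sum_of_fintype, pow_apply_eq N h2 x r k r]
    have cond_eq : ∀ σ : Fin k → Bool,
        (r + ((pS k σ (Fin.last k) : ℤ) : Fin N) = r) ↔ pS k σ (Fin.last k) = 0 := by
      intro σ
      rw [add_eq_left]
      apply intCast_fin_eq_zero
      have hle := abs_pS_le k σ (Fin.last k)
      simp only [Fin.val_last] at hle
      calc |pS k σ (Fin.last k)| ≤ (k : ℤ) := hle
        _ < N := by exact_mod_cast hkN
    have lhs_eq : (∑ σ : Fin k → Bool,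
        if r + ((pS k σ (Fin.last k) : ℤ) : Fin N) = r then wt N x r k σ else 0)
        = ∑ σ ∈ Finset.univ.filter (fun σ : Fin k → Bool => pS k σ (Fin.last k) = 0),
            wt N x r k σ := by
      rw [Finset.sum_filter]
      exact Finset.sum_congr rfl fun σ _ => if_congr (cond_eq σ) rfl rfl
    rw [lhs_eq]
    symm
    refine Finset.sum_bij'
      (i := fun (s : {f : Fin (k + 1) → ℤ // IsClosedWalk k f}) (_ : s ∈ Finset.univ) =>
        signs k s.1)
      (j := fun (σ : Fin k → Bool)
        (hσ : σ ∈ Finset.univ.filter (fun σ : Fin k → Bool => pS k σ (Fin.last k) = 0)) =>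
        (⟨pS k σ, isWalk_pS k σ, (Finset.mem_filter.mp hσ).2⟩ :
          {f : Fin (k + 1) → ℤ // IsClosedWalk k f})) ?_ ?_ ?_ ?_ ?_
    · intro s _
      rw [Finset.mem_filter]
      refine ⟨Finset.mem_univ _, ?_⟩
      rw [pS_signs k s.1 s.2.1, s.2.2]
    · intro σ hσ
      exact Finset.mem_univ _
    · intro s _
      apply Subtype.ext
      funext i
      exact pS_signs k s.1 s.2.1 i
    · intro σ hσ
      exact signs_pS k σ
    · intro s _
      rw [wt_eq_prod]
      refine Finset.prod_congr rfl fun j _ => ?_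
      rw [upcross_eq_card k s.1 s.2.1 j]
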